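/- Let (V,g) be an n-dimensional (n ≥ 3) real vector space with a nondegenerate symmetric bilinear form g, let A be a symmetric bilinear form on V, and suppose rank(A − α·g) = 1 for some real number α. Then g ∧ A² + ((n−2)/2)·A ∧ A − tr(A)·(g ∧ A) + ((tr(A)² − tr(A²))/(2(n−1)))·(g ∧ g) = 0, i.e., the tensor E(A) vanishes. -/

import Mathlib

variable {V : Type*} [AddCommGroup V] [Module ℝ V]

/-- Kulkarni–Nomizu product of two (0,2)-tensors. -/
def kn (A B : V → V → ℝ) : V → V → V → V → ℝ := fun x1 x2 x3 x4 =>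
  A x1 x4 * B x2 x3 + A x2 x3 * B x1 x4 - A x1 x3 * B x2 x4 - A x2 x4 * B x1 x3

/-- The endomorphism `(X ∧_A Y)Z = A(Y,Z)X − A(X,Z)Y`. -/
def wedgeV (A : V → V → ℝ) (x y z : V) : V := A y z • x - A x z • y

/-- Tachibana tensor `Q(A,T)` of a (0,2)-tensor `A` and a (0,4)-tensor `T`. -/
def Q4 (A : V → V → ℝ) (T : V → V → V → V → ℝ) : V → V → V → V → V → V → ℝ :=
  fun x1 x2 x3 x4 x y =>
    -(T (wedgeV A x y x1) x2 x3 x4) - T x1 (wedgeV A x y x2) x3 x4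
      - T x1 x2 (wedgeV A x y x3) x4 - T x1 x2 x3 (wedgeV A x y x4)

/-- if `rank(A − α·g) = 1` then `E(A) = 0`. -/
theorem stmt_10 {V : Type*} [AddCommGroup V] [Module ℝ V] [FiniteDimensional ℝ V]
    (n : ℕ) (hn3 : 3 ≤ n) (hdim : Module.finrank ℝ V = n)
    (g A : V →ₗ[ℝ] V →ₗ[ℝ] ℝ)
    (hg : ∀ x y, g x y = g y x)
    (hgnd : ∀ x : V, (∀ y : V, g x y = 0) → x = 0)
    (hA : ∀ x y, A x y = A y x)
    (a : V →ₗ[ℝ] V) (ha : ∀ x y, g (a x) y = A x y)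
    (α : ℝ)
    (hrank : Module.finrank ℝ (LinearMap.range (a - α • (LinearMap.id : V →ₗ[ℝ] V))) = 1) :
    ∀ x₁ x₂ x₃ x₄ : V,
      kn (fun u v => g u v) (fun u v => A (a u) v) x₁ x₂ x₃ x₄
        + (((n : ℝ) - 2) / 2) * kn (fun u v => A u v) (fun u v => A u v) x₁ x₂ x₃ x₄
        - LinearMap.trace ℝ V a * kn (fun u v => g u v) (fun u v => A u v) x₁ x₂ x₃ x₄
        + (((LinearMap.trace ℝ V a) ^ 2 - LinearMap.trace ℝ V (a ∘ₗ a)) / (2 * ((n : ℝ) - 1)))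
            * kn (fun u v => g u v) (fun u v => g u v) x₁ x₂ x₃ x₄
      = 0 := by
  classical
  set b : V →ₗ[ℝ] V := a - α • (LinearMap.id : V →ₗ[ℝ] V) with hb
  -- b x = a x - α • x
  have hbx : ∀ x : V, b x = a x - α • x := by intro x; simp [hb]
  have hax : ∀ x : V, a x = α • x + b x := by intro x; rw [hbx]; abel
  -- get a spanning vector w of range b
  obtain ⟨v, hv0, hvspan⟩ := finrank_eq_one_iff'.mp hrank
  set w : V := (v : V) with hw
  have hw0 : w ≠ 0 := by
    intro h
    apply hv0
    exact Subtype.ext h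
  -- every b x is a multiple of w
  have hmul : ∀ x : V, ∃ c : ℝ, b x = c • w := by
    intro x
    obtain ⟨c, hc⟩ := hvspan ⟨b x, LinearMap.mem_range_self b x⟩
    exact ⟨c, by simpa [hw] using congrArg (Subtype.val) hc.symm⟩
  choose φ hφ using hmul
  -- symmetry of g(b x, y)
  have hgb : ∀ x y : V, g (b x) y = φ x * g w y := by
    intro x y; rw [hφ x]; simp
  have hBsymm : ∀ x y : V, g (b x) y = g (b y) x := by
    have e : ∀ u v : V, g (b u) v = A u v - α * g u v := by
      intro u v
      rw [hbx]
      simp only [map_sub, LinearMap.sub_apply, map_smul, LinearMap.smul_apply,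
        smul_eq_mul, ha]
    intro x y
    rw [e, e, hA x y, hg x y]
  have hsym : ∀ x y : V, φ x * g w y = φ y * g w x := by
    intro x y; rw [← hgb, ← hgb, hBsymm]
  -- ψ := g w · is nonzero
  have hψne : ∃ y₀ : V, g w y₀ ≠ 0 := by
    by_contra h
    push_neg at h
    exact hw0 (hgnd w h)
  obtain ⟨y₀, hy₀⟩ := hψne
  set k : ℝ := φ y₀ / g w y₀ with hk
  have hφk : ∀ x : V, φ x = k * g w x := by
    intro x
    have := hsym x y₀
    field_simp [hk]
    rw [hk, div_mul_eq_mul_div, eq_div_iff hy₀]; linarith [this]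
  set s : ℝ := g w w with hs
  -- A in closed form
  have hgax : ∀ x y : V, g (a x) y = α * g x y + k * (g w x * g w y) := by
    intro x y
    rw [hax]
    simp [hgb, hφk, hg w x]
    ring
  have hAg : ∀ x y : V, A x y = α * g x y + k * (g w x * g w y) := by
    intro x y; rw [← ha, hgax]
  have hψa : ∀ x : V, g w (a x) = α * g w x + k * s * g w x := by
    intro x
    rw [hg w (a x), hgax, hg x w, hg w w, ← hs]
    ring
  have hA2 : ∀ x y : V, A (a x) y
      = α ^ 2 * g x y + (2 * α * k + k ^ 2 * s) * (g w x * g w y) := by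
    intro x y
    rw [hAg (a x) y, hgax x y, hψa x]
    ring
  -- trace computations
  have hbrank1 : b = LinearMap.smulRight (k • (g w)) w := by
    ext x
    simp [hφ x, hφk, hg w x]
  have htrb : LinearMap.trace ℝ V b = k * s := by
    rw [hbrank1]
    have : LinearMap.smulRight (k • (g w)) w
        = dualTensorHom ℝ V V ((k • (g w)) ⊗ₜ[ℝ] w) := by
      ext x; simp [dualTensorHom_apply]
    rw [this, LinearMap.trace_eq_contract_apply, contractLeft_apply]
    simp [hs]
  have htra : LinearMap.trace ℝ V a = n * α + k * s := by
    have : a = α • (LinearMap.id : V →ₗ[ℝ] V) + b := by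
      rw [hb]; abel
    rw [this, map_add, map_smul, LinearMap.trace_id, hdim, htrb]
    simp [mul_comm]
  have hbb : ∀ x : V, b (b x) = (k * s) • b x := by
    intro x
    rw [hφ x, map_smul, hφ w, hφk w, ← hs, smul_smul, smul_smul]
    congr 1
    ring
  have haa : a ∘ₗ a = α • a + (α + k * s) • b := by
    ext x
    simp only [LinearMap.comp_apply, LinearMap.add_apply, LinearMap.smul_apply]
    rw [hax (a x), hax x, map_add, map_smul, hbb]
    module
  have htra2 : LinearMap.trace ℝ V (a ∘ₗ a)
      = n * α ^ 2 + 2 * α * (k * s) + (k * s) ^ 2 := by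
    rw [haa, map_add, map_smul, map_smul, htra, htrb]
    simp only [smul_eq_mul]
    ring
  -- final computation
  intro x₁ x₂ x₃ x₄
  have hn1 : (n : ℝ) - 1 ≠ 0 := by
    have : (3 : ℝ) ≤ (n : ℝ) := by exact_mod_cast hn3
    linarith
  simp only [kn, hA2, hAg, htra, htra2]
  field_simp
  ring
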